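/- For all parameters A, B, C ∈ ℂ with B ≠ 0 and (C;q)_n ≠ 0 for all n, all y ∈ ℂ with |y| < 1, and all x ∈ ℂ with 0 < |x| < 1, one has x·(D_{q₁} f)(x) = ((1−B)/((1−q₁)B))·[Φ₁(A,q₁B;C;q,q₁;x,y) − Φ₁(A,B;C;q,q₁;x,y)], where f is the function x ↦ Φ₁(A,B;C;q,q₁;x,y) and D_{q₁} is the Jackson q₁-derivative in x. (Equation (2.19).) -/

import Mathlib

open Complex

/-- The q-shifted factorial (z;q)_n = prod_{r=0}^{n-1} (1 - z q^r). -/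
noncomputable def qPoch (q z : ℂ) (n : ℕ) : ℂ :=
  ∏ r ∈ Finset.range n, (1 - z * q ^ r)

/-- The bibasic Humbert hypergeometric function Φ₁ on two independent bases q and q₁. -/
noncomputable def Phi1 (q q1 A B C x y : ℂ) : ℂ :=
  ∑' p : ℕ × ℕ,
    qPoch q A (p.1 + p.2) * qPoch q1 B p.1 /
      (qPoch q C (p.1 + p.2) * qPoch q1 q1 p.1 * qPoch q q p.2) * x ^ p.1 * y ^ p.2

/-- The Jackson p-derivative. -/
noncomputable def jackson (p : ℂ) (f : ℂ → ℂ) (x : ℂ) : ℂ :=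
  (f x - f (p * x)) / ((1 - p) * x)


lemma qPoch_succ (q z : ℂ) (n : ℕ) :
    qPoch q z (n+1) = qPoch q z n * (1 - z * q ^ n) := Finset.prod_range_succ _ _

/-- Key shift identity: (1-B)·(q₁B;q₁)_ℓ = (B;q₁)_ℓ·(1-B q₁^ℓ). -/
lemma qPoch_shift (q1 B : ℂ) (l : ℕ) :
    (1 - B) * qPoch q1 (q1 * B) l = qPoch q1 B l * (1 - B * q1 ^ l) := by
  induction l with
  | zero => simp [qPoch]
  | succ n ih =>
    rw [qPoch_succ, qPoch_succ]
    have : B * q1 ^ (n+1) = (q1 * B) * q1 ^ n := by ring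
    rw [pow_succ]
    linear_combination (1 - q1 * B * q1 ^ n) * ih

/-- Upper bound on |(z;q)_n|. -/
lemma abs_qPoch_le (q z : ℂ) (hq : ‖q‖ < 1) (n : ℕ) :
    ‖qPoch q z n‖ ≤ Real.exp (‖z‖ * (1 - ‖q‖)⁻¹) := by
  have hq0 : (0:ℝ) ≤ ‖q‖ := norm_nonneg _
  calc ‖qPoch q z n‖ ≤ ∏ r ∈ Finset.range n, (1 + ‖z‖ * ‖q‖ ^ r) := by
        rw [qPoch, norm_prod]
        refine Finset.prod_le_prod (fun i _ => norm_nonneg _) (fun i _ => ?_)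
        simpa [norm_mul, norm_pow] using norm_sub_le (1:ℂ) (z * q ^ i)
    _ ≤ ∏ r ∈ Finset.range n, Real.exp (‖z‖ * ‖q‖ ^ r) := by
        refine Finset.prod_le_prod (fun i _ => by positivity) (fun i _ => ?_)
        simpa [add_comm] using Real.add_one_le_exp (‖z‖ * ‖q‖ ^ i)
    _ = Real.exp (∑ r ∈ Finset.range n, ‖z‖ * ‖q‖ ^ r) := by
        rw [Real.exp_sum]
    _ ≤ Real.exp (‖z‖ * (1 - ‖q‖)⁻¹) := by
        apply Real.exp_le_exp.2
        rw [← Finset.mul_sum]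
        have h1 : ∑ r ∈ Finset.range n, ‖q‖ ^ r ≤ (1 - ‖q‖)⁻¹ := by
          have := Summable.sum_le_tsum (Finset.range n) (fun i _ => by positivity)
            (summable_geometric_of_lt_one hq0 hq)
          rwa [tsum_geometric_of_lt_one hq0 hq] at this
        exact mul_le_mul_of_nonneg_left h1 (norm_nonneg z)

/-- Positive lower bound on |(z;q)_n| uniform in n, when all terms are nonzero. -/
lemma exists_qPoch_lb (q z : ℂ) (hq : ‖q‖ < 1) (hz : ∀ n, qPoch q z n ≠ 0) :
    ∃ c > 0, ∀ n, c ≤ ‖qPoch q z n‖ := by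
  have hq0 : (0:ℝ) ≤ ‖q‖ := norm_nonneg _
  -- choose N with tail sum ≤ 1/2
  obtain ⟨N, hN⟩ : ∃ N, ‖z‖ * ‖q‖ ^ N * (1 - ‖q‖)⁻¹ ≤ 1/2 := by
    have h := tendsto_pow_atTop_nhds_zero_of_lt_one hq0 hq
    have h2 : Filter.Tendsto (fun n => ‖z‖ * ‖q‖ ^ n * (1 - ‖q‖)⁻¹)
        Filter.atTop (nhds 0) := by
      simpa using (h.const_mul (‖z‖)).mul_const (1 - ‖q‖)⁻¹
    obtain ⟨N, hN⟩ := (h2.eventually (eventually_le_nhds (by norm_num : (0:ℝ) < 1/2))).exists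
    exact ⟨N, hN⟩
  have htail : ∀ m : ℕ, ∑ i ∈ Finset.range m, ‖z‖ * ‖q‖ ^ (N + i) ≤ 1/2 := by
    intro m
    calc ∑ i ∈ Finset.range m, ‖z‖ * ‖q‖ ^ (N + i)
        = ‖z‖ * ‖q‖ ^ N * ∑ i ∈ Finset.range m, ‖q‖ ^ i := by
          rw [Finset.mul_sum]; congr 1; ext i; rw [pow_add]; ring
      _ ≤ ‖z‖ * ‖q‖ ^ N * (1 - ‖q‖)⁻¹ := by
          refine mul_le_mul_of_nonneg_left ?_ (by positivity)
          have := Summable.sum_le_tsum (Finset.range m) (fun i _ => by positivity)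
            (summable_geometric_of_lt_one hq0 hq)
          rwa [tsum_geometric_of_lt_one hq0 hq] at this
      _ ≤ 1/2 := hN
  have key : ∀ m : ℕ, ‖qPoch q z N‖ *
      (1 - ∑ i ∈ Finset.range m, ‖z‖ * ‖q‖ ^ (N + i)) ≤
      ‖qPoch q z (N + m)‖ := by
    intro m
    induction m with
    | zero => simp
    | succ m ih =>
      have hS := htail m
      have hS0 : (0:ℝ) ≤ ∑ i ∈ Finset.range m, ‖z‖ * ‖q‖ ^ (N + i) :=
        Finset.sum_nonneg (fun i _ => by positivity)
      have hu : ‖z‖ * ‖q‖ ^ (N + m) ≤ 1/2 := by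
        have := htail (m+1)
        rw [Finset.sum_range_succ] at this
        linarith
      have hu0 : (0:ℝ) ≤ ‖z‖ * ‖q‖ ^ (N + m) := by positivity
      have hfac : 1 - ‖z‖ * ‖q‖ ^ (N + m) ≤
          ‖1 - z * q ^ (N + m)‖ := by
        have := norm_sub_norm_le (1:ℂ) (z * q ^ (N + m))
        simpa [norm_mul, norm_pow] using this
      have habs : (0:ℝ) ≤ ‖qPoch q z (N + m)‖ := norm_nonneg _
      rw [show N + (m+1) = (N+m) + 1 by ring, qPoch_succ, norm_mul, Finset.sum_range_succ]
      have h1 : ‖qPoch q z N‖ *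
          (1 - ∑ i ∈ Finset.range m, ‖z‖ * ‖q‖ ^ (N + i)) *
          (1 - ‖z‖ * ‖q‖ ^ (N + m)) ≤
          ‖qPoch q z (N + m)‖ * ‖1 - z * q ^ (N + m)‖ := by
        apply mul_le_mul ih hfac (by linarith) habs
      refine le_trans ?_ h1
      have hP : (0:ℝ) ≤ ‖qPoch q z N‖ := norm_nonneg _
      nlinarith [mul_nonneg hS0 hu0]
  -- assemble
  set a : ℝ := (Finset.range (N+1)).inf' (by simp) (fun n => ‖qPoch q z n‖) with ha
  have ha0 : 0 < a := by
    rw [ha, Finset.lt_inf'_iff]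
    exact fun i _ => norm_pos_iff.mpr (hz i)
  refine ⟨a/2, by positivity, fun n => ?_⟩
  rcases le_or_gt n N with h | h
  · have : a ≤ ‖qPoch q z n‖ :=
      Finset.inf'_le _ (by simp [Nat.lt_succ_iff.mpr h])
    linarith
  · obtain ⟨m, rfl⟩ := Nat.exists_eq_add_of_le h.le
    have h1 := key m
    have h2 := htail m
    have hP : a ≤ ‖qPoch q z N‖ := Finset.inf'_le _ (by simp)
    nlinarith [norm_nonneg (qPoch q z N)]

lemma qPoch_self_ne_zero (q : ℂ) (hq : ‖q‖ < 1) (n : ℕ) : qPoch q q n ≠ 0 := by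
  rw [qPoch]
  refine Finset.prod_ne_zero_iff.2 (fun i _ => ?_)
  intro h
  have : q * q ^ i = 1 := by linear_combination -h
  have : ‖q * q ^ i‖ = 1 := by rw [this, norm_one]
  rw [norm_mul, norm_pow] at this
  have h1 : ‖q‖ * ‖q‖ ^ i ≤ ‖q‖ * 1 := by
    refine mul_le_mul_of_nonneg_left ?_ (norm_nonneg _)
    exact pow_le_one₀ (norm_nonneg _) hq.le
  rw [this] at h1
  simp at h1
  linarith

lemma summable_phi (q q1 A B C x y : ℂ) (hq : ‖q‖ < 1) (hq1 : ‖q1‖ < 1)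
    (hC : ∀ n, qPoch q C n ≠ 0) (hx : ‖x‖ < 1) (hy : ‖y‖ < 1) :
    Summable (fun p : ℕ × ℕ =>
      qPoch q A (p.1 + p.2) * qPoch q1 B p.1 /
        (qPoch q C (p.1 + p.2) * qPoch q1 q1 p.1 * qPoch q q p.2) * x ^ p.1 * y ^ p.2) := by
  obtain ⟨c1, hc1, hC1⟩ := exists_qPoch_lb q C hq hC
  obtain ⟨c2, hc2, hC2⟩ := exists_qPoch_lb q1 q1 hq1 (qPoch_self_ne_zero q1 hq1)
  obtain ⟨c3, hc3, hC3⟩ := exists_qPoch_lb q q hq (qPoch_self_ne_zero q hq)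
  set MA := Real.exp (‖A‖ * (1 - ‖q‖)⁻¹) with hMA
  set MB := Real.exp (‖B‖ * (1 - ‖q1‖)⁻¹) with hMB
  have hMA0 : 0 < MA := Real.exp_pos _
  have hMB0 : 0 < MB := Real.exp_pos _
  set K := MA * MB / (c1 * c2 * c3) with hK
  have hK0 : 0 < K := by positivity
  apply Summable.of_norm_bounded
    (g := fun p : ℕ × ℕ => (K * ‖x‖ ^ p.1) * ‖y‖ ^ p.2)
  · have hsx : Summable (fun n : ℕ => K * ‖x‖ ^ n) :=
      (summable_geometric_of_lt_one (norm_nonneg _) hx).mul_left K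
    have hsy : Summable (fun n : ℕ => ‖y‖ ^ n) :=
      summable_geometric_of_lt_one (norm_nonneg _) hy
    exact hsx.mul_of_nonneg hsy (fun n => by positivity) (fun n => by positivity)
  · rintro ⟨l, k⟩
    simp only [norm_mul, norm_div, norm_pow]
    have h1 : ‖qPoch q A (l+k)‖ ≤ MA := abs_qPoch_le q A hq _
    have h2 : ‖qPoch q1 B l‖ ≤ MB := abs_qPoch_le q1 B hq1 _
    have hd : c1 * c2 * c3 ≤ ‖qPoch q C (l+k)‖ * ‖qPoch q1 q1 l‖
        * ‖qPoch q q k‖ := by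
      have := hC1 (l+k); have := hC2 l; have := hC3 k
      gcongr <;> first | linarith | positivity
    have hdiv : ‖qPoch q A (l+k)‖ * ‖qPoch q1 B l‖ /
        (‖qPoch q C (l+k)‖ * ‖qPoch q1 q1 l‖ * ‖qPoch q q k‖)
        ≤ K := by
      rw [hK]
      apply div_le_div₀ (by positivity) ?_ (by positivity) hd
      exact mul_le_mul h1 h2 (norm_nonneg _) hMA0.le
    calc ‖qPoch q A (l+k)‖ * ‖qPoch q1 B l‖ /
        (‖qPoch q C (l+k)‖ * ‖qPoch q1 q1 l‖ * ‖qPoch q q k‖)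
        * ‖x‖ ^ l * ‖y‖ ^ k
        ≤ K * ‖x‖ ^ l * ‖y‖ ^ k := by
          gcongr
      _ = K * ‖x‖ ^ l * ‖y‖ ^ k := rfl


theorem stmt15 (q q1 A B C x y : ℂ)
    (hq0 : 0 < ‖q‖) (hq1 : ‖q‖ < 1)
    (hq10 : 0 < ‖q1‖) (hq11 : ‖q1‖ < 1)
    (hC : ∀ n : ℕ, qPoch q C n ≠ 0)
    (hB : B ≠ 0) (hx0 : 0 < ‖x‖) (hx : ‖x‖ < 1) (hy : ‖y‖ < 1) :
    x * jackson q1 (fun t => Phi1 q q1 A B C t y) x =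
      ((1 - B) / ((1 - q1) * B)) *
        (Phi1 q q1 A (q1 * B) C x y - Phi1 q q1 A B C x y) := by
  have hxne : x ≠ 0 := by
    intro h; rw [h] at hx0; simp at hx0
  have h1q1 : (1:ℂ) - q1 ≠ 0 := by
    intro h
    have : q1 = 1 := by linear_combination -h
    rw [this] at hq11; simp at hq11
  have hq1x : ‖q1 * x‖ < 1 := by
    rw [norm_mul]
    calc ‖q1‖ * ‖x‖ ≤ 1 * ‖x‖ := by
          exact mul_le_mul_of_nonneg_right hq11.le (norm_nonneg _)
      _ < 1 := by simpa using hx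
  have S1 := summable_phi q q1 A B C x y hq1 hq11 hC hx hy
  have S2 := summable_phi q q1 A B C (q1*x) y hq1 hq11 hC hq1x hy
  have S3 := summable_phi q q1 A (q1*B) C x y hq1 hq11 hC hx hy
  rw [jackson]
  simp only [Phi1]
  rw [← Summable.tsum_sub S1 S2, ← Summable.tsum_sub S3 S1]
  have step : ∀ T : ℂ, x * (T / ((1 - q1) * x)) = (1 - q1)⁻¹ * T := by
    intro T; field_simp
  rw [step, ← tsum_mul_left, ← tsum_mul_left]
  refine tsum_congr (fun p => ?_)
  obtain ⟨l, k⟩ := p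
  simp only
  have key := qPoch_shift q1 B l
  have hD1 := hC (l + k)
  have hD2 := qPoch_self_ne_zero q1 hq11 l
  have hD3 := qPoch_self_ne_zero q hq1 k
  rw [mul_pow]
  field_simp
  ring_nf
  linear_combination (-(qPoch q A (l+k) * y^k)) * key
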